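/- arXiv:1409.5154 — 2 statements merged into one kernel-verified Lean document; each statement's English description precedes it below -/
import Mathlib

section
/- For the complete bipartite graph K_{m,n} with m,n ≥ 1, the Thue choice number π_ch(K_{m,n}) equals min{m,n} + 1. -/
/-- A list is a repetition if it is of the form `w ++ w` for a nonempty `w`. -/
def IsRepetition {α : Type*} (l : List α) : Prop := ∃ w : List α, w ≠ [] ∧ l = w ++ w

/-- A list is non-repetitive if no block of consecutive elements is a repetition. -/
def NonRepetitive {α : Type*} (l : List α) : Prop :=
  ∀ t : List α, t <:+: l → ¬ IsRepetition t

/-- A vertex colouring is non-repetitive if the colour sequence of every path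
is not a repetition. -/
def NonRepColoring {V β : Type*} (G : SimpleGraph V) (φ : V → β) : Prop :=
  ∀ ⦃u v : V⦄ (p : G.Walk u v), p.IsPath → ¬ IsRepetition (p.support.map φ)

/-- The Thue chromatic number: minimum number of colours of a non-repetitive colouring. -/
noncomputable def thueNumber {V : Type*} [Fintype V] (G : SimpleGraph V) : ℕ :=
  sInf {k | ∃ φ : V → Fin k, NonRepColoring G φ}

/-- The Thue choice number: least `k` such that from any lists of size at least `k`
one can choose a non-repetitive colouring. -/
noncomputable def thueChoiceNumber {V : Type*} [Fintype V] (G : SimpleGraph V) : ℕ :=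
  sInf {k | ∀ L : V → Finset ℕ, (∀ v, k ≤ (L v).card) →
    ∃ φ : V → ℕ, (∀ v, φ v ∈ L v) ∧ NonRepColoring G φ}

/-- The independence number of a graph. -/
noncomputable def indepNum {V : Type*} [Fintype V] (G : SimpleGraph V) : ℕ :=
  sSup {n | ∃ s : Finset V, (∀ a ∈ s, ∀ b ∈ s, ¬ G.Adj a b) ∧ s.card = n}

/-- The lexicographic product of two simple graphs. -/
def lexProd {V W : Type*} (G : SimpleGraph V) (H : SimpleGraph W) : SimpleGraph (V × W) where
  Adj x y := G.Adj x.1 y.1 ∨ (x.1 = y.1 ∧ H.Adj x.2 y.2)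
  symm := by
    constructor
    rintro x y (h | ⟨h1, h2⟩)
    · exact Or.inl h.symm
    · exact Or.inr ⟨h1.symm, h2.symm⟩
  loopless := by
    constructor
    rintro x (h | ⟨h1, h2⟩)
    · exact G.loopless.irrefl _ h
    · exact H.loopless.irrefl _ h2


section ThueAux

open SimpleGraph List

lemma nonrep_of_good {m n : ℕ} {φ : Fin m ⊕ Fin n → ℕ}
    (hdisj : ∀ i j, φ (Sum.inl i) ≠ φ (Sum.inr j))
    (hinj : (∀ i j : Fin m, φ (Sum.inl i) = φ (Sum.inl j) → i = j) ∨
            (∀ i j : Fin n, φ (Sum.inr i) = φ (Sum.inr j) → i = j)) :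
    NonRepColoring (completeBipartiteGraph (Fin m) (Fin n)) φ := by
  rintro u v p hp ⟨w, hw, hww⟩
  have hnd : p.support.Nodup := hp.support_nodup
  have hchain : p.support.Chain' (completeBipartiteGraph (Fin m) (Fin n)).Adj :=
    p.isChain_adj_support
  revert hnd hchain hww
  generalize p.support = s
  intro hww hnd hchain
  set t := w.length with ht
  have htpos : 1 ≤ t := List.length_pos_iff.mpr hw
  have hlen : s.length = t + t := by
    have := congrArg List.length hww
    simpa using this
  have key : ∀ (i : ℕ) (hi : i < t),
      φ (s[i]'(by omega)) = φ (s[i + t]'(by omega)) := by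
    intro i hi
    have hiw : i < w.length := by omega
    have him : i < (s.map φ).length := by rw [List.length_map]; omega
    have him2 : i + t < (s.map φ).length := by rw [List.length_map]; omega
    have h1 : (s.map φ)[i]'him = w[i]'hiw := by
      simp only [hww]; exact List.getElem_append_left hiw
    have h2 : (s.map φ)[i + t]'him2 = w[i]'hiw := by
      simp only [hww]
      rw [List.getElem_append_right (by omega)]
      congr 1
      omega
    have e1 : (s.map φ)[i]'him = φ (s[i]'(by omega)) := List.getElem_map φ
    have e2 : (s.map φ)[i + t]'him2 = φ (s[i + t]'(by omega)) := List.getElem_map φ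
    exact e1.symm.trans (h1.trans (h2.symm.trans e2))
  have hadj : ∀ (i : ℕ) (hi : i + 1 < s.length),
      (completeBipartiteGraph (Fin m) (Fin n)).Adj (s[i]'(by omega)) (s[i+1]'hi) := by
    intro i hi
    have := List.isChain_iff_getElem.mp hchain i (by omega)
    simpa using this
  have hne : ∀ (i j : ℕ) (hi : i < s.length) (hj : j < s.length), i ≠ j →
      s[i]'hi ≠ s[j]'hj := by
    intro i j hi hj hij h
    exact hij (hnd.getElem_inj_iff.mp h)
  rcases hinj with hL | hR
  · have other : ∀ (i : ℕ) (hi : i < t),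
        (s[i]'(by omega)).isRight ∧ (s[i + t]'(by omega)).isRight := by
      intro i hi
      have hc := key i hi
      rcases h1 : s[i]'(by omega) with a | b
      · rcases h2 : s[i + t]'(by omega) with a' | b'
        · rw [h1, h2] at hc
          exact absurd (congrArg Sum.inl (hL _ _ hc))
            (by rw [← h1, ← h2]; exact hne _ _ _ _ (by omega))
        · rw [h1, h2] at hc; exact absurd hc (hdisj a b')
      · rcases h2 : s[i + t]'(by omega) with a' | b'
        · rw [h1, h2] at hc; exact absurd hc.symm (hdisj a' b)
        · simp
    have h0 := (other 0 (by omega)).1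
    have h1 : (s[1]'(by omega)).isRight := by
      rcases Nat.lt_or_ge 1 t with h | h
      · exact (other 1 h).1
      · have ht1 : t = 1 := by omega
        have := (other 0 (by omega)).2
        simpa [ht1] using this
    have := hadj 0 (by omega)
    rcases hx : s[0]'(by omega) with a | b <;> rcases hy : s[1]'(by omega) with a' | b' <;>
      rw [hx] at h0 <;> rw [hy] at h1 <;> simp_all
  · have other : ∀ (i : ℕ) (hi : i < t),
        (s[i]'(by omega)).isLeft ∧ (s[i + t]'(by omega)).isLeft := by
      intro i hi
      have hc := key i hi
      rcases h1 : s[i]'(by omega) with a | b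
      · rcases h2 : s[i + t]'(by omega) with a' | b'
        · simp
        · rw [h1, h2] at hc; exact absurd hc (hdisj a b')
      · rcases h2 : s[i + t]'(by omega) with a' | b'
        · rw [h1, h2] at hc; exact absurd hc.symm (hdisj a' b)
        · rw [h1, h2] at hc
          exact absurd (congrArg Sum.inr (hR _ _ hc))
            (by rw [← h1, ← h2]; exact hne _ _ _ _ (by omega))
    have h0 := (other 0 (by omega)).1
    have h1 : (s[1]'(by omega)).isLeft := by
      rcases Nat.lt_or_ge 1 t with h | h
      · exact (other 1 h).1
      · have ht1 : t = 1 := by omega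
        have := (other 0 (by omega)).2
        simpa [ht1] using this
    have := hadj 0 (by omega)
    rcases hx : s[0]'(by omega) with a | b <;> rcases hy : s[1]'(by omega) with a' | b' <;>
      rw [hx] at h0 <;> rw [hy] at h1 <;> simp_all

lemma nonrep_disj {m n : ℕ} {φ : Fin m ⊕ Fin n → ℕ}
    (h : NonRepColoring (completeBipartiteGraph (Fin m) (Fin n)) φ)
    (i : Fin m) (j : Fin n) : φ (Sum.inl i) ≠ φ (Sum.inr j) := by
  intro he
  have hadj : (completeBipartiteGraph (Fin m) (Fin n)).Adj (Sum.inl i) (Sum.inr j) := by simp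
  have hpath : (Walk.cons hadj Walk.nil).IsPath := by
    simp [Walk.isPath_def]
  exact h _ hpath ⟨[φ (Sum.inl i)], by simp, by simp [he]⟩

lemma nonrep_inj {m n : ℕ} {φ : Fin m ⊕ Fin n → ℕ}
    (h : NonRepColoring (completeBipartiteGraph (Fin m) (Fin n)) φ) :
    (∀ i j : Fin m, φ (Sum.inl i) = φ (Sum.inl j) → i = j) ∨
    (∀ i j : Fin n, φ (Sum.inr i) = φ (Sum.inr j) → i = j) := by
  by_contra hc
  push_neg at hc
  obtain ⟨⟨i, i', hii', hne1⟩, ⟨j, j', hjj', hne2⟩⟩ := hc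
  have h1 : (completeBipartiteGraph (Fin m) (Fin n)).Adj (Sum.inl i) (Sum.inr j) := by simp
  have h2 : (completeBipartiteGraph (Fin m) (Fin n)).Adj (Sum.inr j) (Sum.inl i') := by simp
  have h3 : (completeBipartiteGraph (Fin m) (Fin n)).Adj (Sum.inl i') (Sum.inr j') := by simp
  have hpath : (Walk.cons h1 (Walk.cons h2 (Walk.cons h3 Walk.nil))).IsPath := by
    simp [Walk.isPath_def, hne1, hne2]
  exact h _ hpath ⟨[φ (Sum.inl i), φ (Sum.inr j)], by simp, by simp [hii', hjj']⟩

lemma exists_injective_choice {k : ℕ} (L : Fin k → Finset ℕ) (hL : ∀ i, k ≤ (L i).card) :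
    ∃ f : Fin k → ℕ, Function.Injective f ∧ ∀ i, f i ∈ L i := by
  apply (Finset.all_card_le_biUnion_card_iff_exists_injective L).mp
  intro s
  rcases s.eq_empty_or_nonempty with rfl | ⟨i, hi⟩
  · simp
  · calc s.card ≤ k := le_trans (Finset.card_le_univ s) (by simp)
      _ ≤ (L i).card := hL i
      _ ≤ (s.biUnion L).card :=
        Finset.card_le_card (fun x hx => Finset.mem_biUnion.mpr ⟨i, hi, hx⟩)

lemma upper_left {m n : ℕ} (L : Fin m ⊕ Fin n → Finset ℕ)
    (hL : ∀ v, m + 1 ≤ (L v).card) :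
    ∃ φ : Fin m ⊕ Fin n → ℕ, (∀ v, φ v ∈ L v) ∧
      NonRepColoring (completeBipartiteGraph (Fin m) (Fin n)) φ := by
  obtain ⟨fA, hfI, hfM⟩ := exists_injective_choice (fun i => L (Sum.inl i))
    (fun i => le_trans (by omega) (hL (Sum.inl i)))
  set A : Finset ℕ := Finset.image fA Finset.univ with hA
  have hAcard : A.card ≤ m := le_trans Finset.card_image_le (by simp)
  have hB : ∀ j : Fin n, (L (Sum.inr j) \ A).Nonempty := by
    intro j
    rw [Finset.sdiff_nonempty]
    intro hsub
    have := Finset.card_le_card hsub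
    have := hL (Sum.inr j)
    omega
  refine ⟨Sum.elim fA (fun j => (hB j).choose), ?_, ?_⟩
  · rintro (i | j)
    · exact hfM i
    · exact (Finset.mem_sdiff.mp (hB j).choose_spec).1
  · apply nonrep_of_good
    · intro i j he
      have he' : fA i = (hB j).choose := he
      exact (Finset.mem_sdiff.mp (hB j).choose_spec).2
        (he' ▸ Finset.mem_image.mpr ⟨i, Finset.mem_univ i, rfl⟩)
    · exact Or.inl (fun i j h => hfI h)

lemma upper_right {m n : ℕ} (L : Fin m ⊕ Fin n → Finset ℕ)
    (hL : ∀ v, n + 1 ≤ (L v).card) :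
    ∃ φ : Fin m ⊕ Fin n → ℕ, (∀ v, φ v ∈ L v) ∧
      NonRepColoring (completeBipartiteGraph (Fin m) (Fin n)) φ := by
  obtain ⟨fB, hfI, hfM⟩ := exists_injective_choice (fun j => L (Sum.inr j))
    (fun j => le_trans (by omega) (hL (Sum.inr j)))
  set B : Finset ℕ := Finset.image fB Finset.univ with hB'
  have hBcard : B.card ≤ n := le_trans Finset.card_image_le (by simp)
  have hA : ∀ i : Fin m, (L (Sum.inl i) \ B).Nonempty := by
    intro i
    rw [Finset.sdiff_nonempty]
    intro hsub
    have := Finset.card_le_card hsub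
    have := hL (Sum.inl i)
    omega
  refine ⟨Sum.elim (fun i => (hA i).choose) fB, ?_, ?_⟩
  · rintro (i | j)
    · exact (Finset.mem_sdiff.mp (hA i).choose_spec).1
    · exact hfM j
  · apply nonrep_of_good
    · intro i j he
      have he' : (hA i).choose = fB j := he
      exact (Finset.mem_sdiff.mp (hA i).choose_spec).2
        (he' ▸ Finset.mem_image.mpr ⟨j, Finset.mem_univ j, rfl⟩)
    · exact Or.inr (fun i j h => hfI h)

lemma lower_bound {m n : ℕ} (hm : 1 ≤ m) (hn : 1 ≤ n) :
    ¬ ∃ φ : Fin m ⊕ Fin n → ℕ, (∀ v, φ v ∈ Finset.range (min m n)) ∧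
      NonRepColoring (completeBipartiteGraph (Fin m) (Fin n)) φ := by
  rintro ⟨φ, hmem, hnr⟩
  have hdisj := nonrep_disj hnr
  rcases nonrep_inj hnr with hL | hR
  · have hb : ∀ i : Fin m, φ (Sum.inl i) < min m n :=
      fun i => Finset.mem_range.mp (hmem _)
    set f : Fin m → Fin (min m n) := fun i => ⟨φ (Sum.inl i), hb i⟩ with hf
    have hfi : Function.Injective f := fun i j h =>
      hL i j (by simpa [hf, Fin.ext_iff] using h)
    have hcard : m ≤ min m n := by simpa using Fintype.card_le_of_injective f hfi
    have hbij : Function.Bijective f :=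
      (Fintype.bijective_iff_injective_and_card f).mpr ⟨hfi, by simp; omega⟩
    obtain ⟨i, hi⟩ := hbij.2 ⟨φ (Sum.inr ⟨0, hn⟩), Finset.mem_range.mp (hmem _)⟩
    exact hdisj i ⟨0, hn⟩ (by simpa [hf, Fin.ext_iff] using hi)
  · have hb : ∀ j : Fin n, φ (Sum.inr j) < min m n :=
      fun j => Finset.mem_range.mp (hmem _)
    set f : Fin n → Fin (min m n) := fun j => ⟨φ (Sum.inr j), hb j⟩ with hf
    have hfi : Function.Injective f := fun i j h =>
      hR i j (by simpa [hf, Fin.ext_iff] using h)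
    have hcard : n ≤ min m n := by simpa using Fintype.card_le_of_injective f hfi
    have hbij : Function.Bijective f :=
      (Fintype.bijective_iff_injective_and_card f).mpr ⟨hfi, by simp; omega⟩
    obtain ⟨j, hj⟩ := hbij.2 ⟨φ (Sum.inl ⟨0, hm⟩), Finset.mem_range.mp (hmem _)⟩
    have : φ (Sum.inr j) = φ (Sum.inl ⟨0, hm⟩) := by simpa [hf, Fin.ext_iff] using hj
    exact hdisj ⟨0, hm⟩ j this.symm

end ThueAux

/-- `π_ch(K_{m,n}) = min{m,n} + 1`. -/
theorem thueChoiceNumber_completeBipartite (m n : ℕ) (hm : 1 ≤ m) (hn : 1 ≤ n) :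
    thueChoiceNumber (completeBipartiteGraph (Fin m) (Fin n)) = min m n + 1 := by
  have hup : (min m n + 1) ∈ {k | ∀ L : (Fin m ⊕ Fin n) → Finset ℕ,
      (∀ v, k ≤ (L v).card) → ∃ φ : (Fin m ⊕ Fin n) → ℕ, (∀ v, φ v ∈ L v) ∧
        NonRepColoring (completeBipartiteGraph (Fin m) (Fin n)) φ} := by
    intro L hL
    rcases le_total m n with h | h
    · have hmin : min m n = m := min_eq_left h
      exact upper_left L (fun v => by have := hL v; omega)
    · have hmin : min m n = n := min_eq_right h
      exact upper_right L (fun v => by have := hL v; omega)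
  unfold thueChoiceNumber
  apply le_antisymm
  · exact Nat.sInf_le hup
  · apply le_csInf ⟨_, hup⟩
    intro k hk
    by_contra hlt
    push_neg at hlt
    have hk' : ∀ L : (Fin m ⊕ Fin n) → Finset ℕ, (∀ v, min m n ≤ (L v).card) →
        ∃ φ : (Fin m ⊕ Fin n) → ℕ, (∀ v, φ v ∈ L v) ∧
          NonRepColoring (completeBipartiteGraph (Fin m) (Fin n)) φ :=
      fun L hL => hk L (fun v => le_trans (by omega) (hL v))
    exact lower_bound hm hn
      (hk' (fun _ => Finset.range (min m n)) (fun v => by simp))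
end

section
/- Let G be a complete multipartite graph on n vertices with independence number α(G), and let H be any finite simple graph. Then π(G ∘ H) = π(H) + (n − α(G))·|V(H)|. -/
section Lists
variable {α β : Type*}

lemma isRepetition_map (f : α → β) {l : List α} (h : IsRepetition l) :
    IsRepetition (l.map f) := by
  obtain ⟨w, hw, rfl⟩ := h
  exact ⟨w.map f, by simpa using hw, by simp⟩

lemma isRepetition_of_map {f : α → β} (hf : Function.Injective f) {l : List α}
    (h : IsRepetition (l.map f)) : IsRepetition l := by
  obtain ⟨w, hw, hl⟩ := h
  have hlen : l.length = w.length + w.length := by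
    have := congrArg List.length hl; simpa using this
  have htl : (l.take w.length).length = w.length := by
    simp [hlen]
  have hdl : (l.drop w.length).length = w.length := by
    simp [hlen]
  have hsplit : l = l.take w.length ++ l.drop w.length := (List.take_append_drop _ _).symm
  have hmap : (l.take w.length).map f ++ (l.drop w.length).map f = w ++ w := by
    rw [← List.map_append, ← hsplit, hl]
  have h1 : (l.take w.length).map f = w ∧ (l.drop w.length).map f = w :=
    List.append_inj hmap (by rw [List.length_map, htl])
  have h2 : l.take w.length = l.drop w.length :=
    List.map_injective_iff.2 hf (h1.1.trans h1.2.symm)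
  refine ⟨l.take w.length, ?_, by nth_rewrite 2 [h2]; exact hsplit⟩
  intro h0
  rw [h0] at htl
  exact hw (List.length_eq_zero_iff.1 htl.symm)

lemma not_isRepetition_of_nodup {l : List α} (h : l.Nodup) : ¬ IsRepetition l := by
  rintro ⟨w, hw, rfl⟩
  rw [List.nodup_append] at h
  obtain ⟨a, ha⟩ := List.exists_mem_of_ne_nil w hw
  exact h.2.2 a ha a ha rfl

lemma chain'_imp_mem {R S : α → α → Prop} :
    ∀ {l : List α}, (∀ a ∈ l, ∀ b ∈ l, R a b → S a b) → List.Chain' R l → List.Chain' S l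
  | [], _, _ => List.isChain_nil
  | [_], _, _ => List.isChain_singleton _
  | a :: b :: t, h, hc => by
      simp only [List.Chain', List.isChain_cons_cons] at hc ⊢
      exact ⟨h a (by simp) b (by simp) hc.1,
        chain'_imp_mem (fun x hx y hy => h x (by simp [hx]) y (by simp [hy])) hc.2⟩

lemma forall_eq_of_chain {f : α → β} :
    ∀ (a : α) (t : List α), List.Chain (fun x y => f x = f y) a t → ∀ x ∈ t, f x = f a
  | _, [], _, x, hx => absurd hx (by simp)
  | a, b :: t, hc, x, hx => by
      replace hc := List.isChain_cons_cons.1 hc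
      rcases List.mem_cons.1 hx with rfl | hx
      · exact hc.1.symm
      · exact (forall_eq_of_chain b t hc.2 x hx).trans hc.1.symm

lemma forall_eq_of_chain' {f : α → β} {l : List α}
    (h : List.Chain' (fun x y => f x = f y) l) : ∀ x ∈ l, ∀ y ∈ l, f x = f y := by
  cases l with
  | nil => intro x hx; exact absurd hx (by simp)
  | cons a t =>
    have ha : ∀ z ∈ a :: t, f z = f a := by
      intro z hz
      rcases List.mem_cons.1 hz with rfl | hz
      · rfl
      · exact forall_eq_of_chain a t h z hz
    intro x hx y hy
    rw [ha x hx, ha y hy]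

end Lists

section Walks
variable {V : Type*} (G : SimpleGraph V)

lemma exists_path_of_list :
    ∀ (t : List V) (a : V), List.Chain G.Adj a t → (a :: t).Nodup →
      ∃ (v : V) (p : G.Walk a v), p.IsPath ∧ p.support = a :: t
  | [], a, _, _ => ⟨a, SimpleGraph.Walk.nil, by simp, by simp⟩
  | b :: t, a, hc, hn => by
      replace hc := List.isChain_cons_cons.1 hc
      obtain ⟨v, p, hp, hs⟩ := exists_path_of_list (t) b hc.2 (List.Nodup.of_cons hn)
      refine ⟨v, SimpleGraph.Walk.cons hc.1 p, ?_, by simp [hs]⟩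
      rw [SimpleGraph.Walk.cons_isPath_iff]
      exact ⟨hp, by rw [hs]; exact (List.nodup_cons.1 hn).1⟩

lemma nonRepColoring_iff {β : Type*} (φ : V → β) :
    NonRepColoring G φ ↔
      ∀ l : List V, l ≠ [] → l.Chain' G.Adj → l.Nodup → ¬ IsRepetition (l.map φ) := by
  constructor
  · intro h l hl hc hn
    match l, hl with
    | a :: t, _ =>
      obtain ⟨v, p, hp, hs⟩ := exists_path_of_list G t a hc hn
      rw [← hs]
      exact h p hp
  · intro h u v p hp
    exact h p.support p.support_ne_nil p.isChain_adj_support hp.support_nodup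

end Walks

section ThueNumber
variable {V : Type*} [Fintype V] (G : SimpleGraph V)

omit [Fintype V] in
lemma nonRepColoring_of_injective {β : Type*} {φ : V → β} (hφ : Function.Injective φ) :
    NonRepColoring G φ := fun _ _ _ hp =>
  not_isRepetition_of_nodup (hp.support_nodup.map hφ)

lemma thueNumber_set_nonempty : {k | ∃ φ : V → Fin k, NonRepColoring G φ}.Nonempty :=
  ⟨Fintype.card V, (Fintype.equivFin V : V ≃ _),
    nonRepColoring_of_injective G (Equiv.injective _)⟩

lemma exists_thue_coloring : ∃ φ : V → Fin (thueNumber G), NonRepColoring G φ :=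
  Nat.sInf_mem (thueNumber_set_nonempty G)

lemma thueNumber_le {k : ℕ} (φ : V → Fin k) (h : NonRepColoring G φ) : thueNumber G ≤ k :=
  Nat.sInf_le ⟨φ, h⟩

lemma le_thueNumber {m : ℕ} (h : ∀ k (φ : V → Fin k), NonRepColoring G φ → m ≤ k) :
    m ≤ thueNumber G :=
  le_csInf (thueNumber_set_nonempty G) (fun k ⟨φ, hφ⟩ => h k φ hφ)

end ThueNumber

section Indep
variable {ι : Type*} [Fintype ι] (V : ι → Type*) [∀ i, Fintype (V i)]

/-- the canonical part as a finset of the sigma type -/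
def partFinset (i : ι) : Finset (Σ j, V j) :=
  Finset.univ.map ⟨Sigma.mk i, sigma_mk_injective⟩

omit [Fintype ι] in
lemma card_partFinset (i : ι) : (partFinset V i).card = Fintype.card (V i) := by
  simp [partFinset]

lemma indep_bound {s : Finset (Σ j, V j)}
    (hs : ∀ a ∈ s, ∀ b ∈ s, ¬ (SimpleGraph.completeMultipartiteGraph V).Adj a b) :
    s.card ≤ Finset.univ.sup fun i => Fintype.card (V i) := by
  rcases s.eq_empty_or_nonempty with rfl | ⟨a, ha⟩
  · simp
  · have hsub : s ⊆ partFinset V a.1 := by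
      intro b hb
      have h1 : b.1 = a.1 := by
        have := hs a ha b hb
        simp only [SimpleGraph.comap_adj, SimpleGraph.top_adj, not_ne_iff] at this
        exact this.symm
      obtain ⟨j, v⟩ := b
      subst h1
      simp [partFinset]
    have h2 : Fintype.card (V a.1) ≤ Finset.univ.sup fun i => Fintype.card (V i) :=
      Finset.le_sup (f := fun i => Fintype.card (V i)) (Finset.mem_univ a.1)
    calc s.card ≤ (partFinset V a.1).card := Finset.card_le_card hsub
      _ = Fintype.card (V a.1) := card_partFinset V a.1
      _ ≤ _ := h2

lemma indepNum_completeMultipartite [Nonempty (Σ i, V i)] :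
    indepNum (SimpleGraph.completeMultipartiteGraph V) =
      Finset.univ.sup fun i => Fintype.card (V i) := by
  have hι : Nonempty ι := ⟨(Classical.arbitrary (Σ i, V i)).1⟩
  apply le_antisymm
  · refine csSup_le ?_ ?_
    · exact ⟨0, ⟨∅, fun a ha => absurd ha (by simp), rfl⟩⟩
    · rintro m ⟨s, hs, rfl⟩
      exact indep_bound V hs
  · obtain ⟨i, -, hi⟩ := Finset.exists_mem_eq_sup Finset.univ Finset.univ_nonempty
      (fun i => Fintype.card (V i))
    have hbdd : BddAbove {n | ∃ s : Finset (Σ j, V j),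
        (∀ a ∈ s, ∀ b ∈ s, ¬ (SimpleGraph.completeMultipartiteGraph V).Adj a b) ∧ s.card = n} := by
      refine ⟨Finset.univ.sup fun i => Fintype.card (V i), ?_⟩
      rintro m ⟨s, hs, rfl⟩
      exact indep_bound V hs
    apply le_csSup hbdd
    refine ⟨partFinset V i, ?_, by rw [card_partFinset, hi]⟩
    intro a ha b hb
    simp only [partFinset, Finset.mem_map, Finset.mem_univ, Function.Embedding.coeFn_mk,
      true_and] at ha hb
    obtain ⟨va, rfl⟩ := ha
    obtain ⟨vb, rfl⟩ := hb
    simp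
end Indep

section Upper
variable {ι : Type*} [Fintype ι] (V : ι → Type*) [∀ i, Fintype (V i)]
  {W : Type*} [Fintype W] (H : SimpleGraph W)

lemma upper_aux [Nonempty ι] :
    thueNumber (lexProd (SimpleGraph.completeMultipartiteGraph V) H) ≤
      thueNumber H +
        (Fintype.card (Σ i, V i) - Finset.univ.sup fun i => Fintype.card (V i)) *
          Fintype.card W := by
  classical
  set m := thueNumber H with hm
  set α : ℕ := Finset.univ.sup fun i => Fintype.card (V i) with hα
  set n := Fintype.card (Σ i, V i) with hn
  set M := (n - α) * Fintype.card W with hM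
  obtain ⟨i₀, -, hi₀⟩ := Finset.exists_mem_eq_sup Finset.univ Finset.univ_nonempty
    (fun i => Fintype.card (V i))
  obtain ⟨ψ, hψ⟩ := exists_thue_coloring H
  rw [nonRepColoring_iff] at hψ
  have hcard : Fintype.card {x : (Σ i, V i) × W // x.1.1 ≠ i₀} ≤ M := by
    have hf : Function.Injective
        (fun x : {x : (Σ i, V i) × W // x.1.1 ≠ i₀} =>
          ((⟨x.1.1, x.2⟩ : {u : Σ i, V i // u.1 ≠ i₀}), x.1.2)) := by
      rintro ⟨⟨u, w⟩, h⟩ ⟨⟨u', w'⟩, h'⟩ heq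
      simp only [Prod.mk.injEq, Subtype.mk.injEq] at heq
      simp [heq.1, heq.2]
    have h1 : Fintype.card {x : (Σ i, V i) × W // x.1.1 ≠ i₀}
        ≤ Fintype.card {u : Σ i, V i // u.1 ≠ i₀} * Fintype.card W := by
      rw [← Fintype.card_prod]; exact Fintype.card_le_of_injective _ hf
    have h3 : α ≤ Fintype.card {u : Σ i, V i // u.1 = i₀} := by
      rw [hα, hi₀]
      exact Fintype.card_le_of_injective
        (fun v => (⟨⟨i₀, v⟩, rfl⟩ : {u : Σ i, V i // u.1 = i₀}))
        (fun v v' h => by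
          have h2 : (⟨i₀, v⟩ : Σ i, V i) = ⟨i₀, v'⟩ := congrArg Subtype.val h
          exact sigma_mk_injective h2)
    have h2 : Fintype.card {u : Σ i, V i // u.1 ≠ i₀} ≤ n - α :=
      (Fintype.card_subtype_compl _).le.trans (Nat.sub_le_sub_left h3 n)
    exact h1.trans (Nat.mul_le_mul_right _ h2)
  set emb : {x : (Σ i, V i) × W // x.1.1 ≠ i₀} ↪ Fin M :=
    (Fintype.equivFin _).toEmbedding.trans (Fin.castLEEmb hcard) with hemb
  set φ : (Σ i, V i) × W → Fin (m + M) := fun x =>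
    if h : x.1.1 = i₀ then Fin.castAdd M (ψ x.2) else Fin.natAdd m (emb ⟨x, h⟩) with hφ
  apply thueNumber_le _ φ
  rw [nonRepColoring_iff]
  rintro l hl hc hn' ⟨w, hw, hmap⟩
  by_cases hcase : ∀ x ∈ l, x.1.1 = i₀
  · -- all the vertices lie in the large part, hence in a single copy of `H`
    have hchain : List.Chain' (fun a b : (Σ i, V i) × W => a.1 = b.1 ∧ H.Adj a.2 b.2) l := by
      refine chain'_imp_mem (fun a ha b hb hab => ?_) hc
      rcases hab with h | h
      · exact absurd (SimpleGraph.comap_adj.1 h) (by simp [hcase a ha, hcase b hb])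
      · exact h
    obtain ⟨a, t, rfl⟩ := List.exists_cons_of_ne_nil hl
    set l' := a :: t with hl'
    have hfst : ∀ x ∈ l', x.1 = a.1 := fun x hx =>
      forall_eq_of_chain' (f := Prod.fst) (hchain.imp fun _ _ h => h.1) x hx a (by simp [hl'])
    set l₂ := l'.map Prod.snd with hl₂
    have hleq : l'.map ((fun x : W => ((a.1 : Σ i, V i), x)) ∘ Prod.snd) = l' := by
      conv_rhs => rw [← List.map_id l']
      refine List.map_congr_left (fun x hx => ?_)
      exact Prod.ext (hfst x hx).symm rfl
    have hnd2 : l₂.Nodup := by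
      refine List.Nodup.of_map (fun x : W => ((a.1 : Σ i, V i), x)) ?_
      rw [hl₂, List.map_map, hleq]
      exact hn'
    have hch2 : List.Chain' H.Adj l₂ :=
      (List.isChain_map _).2 (hchain.imp fun _ _ h => h.2)
    have hrep2 : IsRepetition ((l₂.map ψ).map (Fin.castAdd M)) := by
      have heq : l'.map φ = (l₂.map ψ).map (Fin.castAdd M) := by
        rw [hl₂, List.map_map, List.map_map]
        refine List.map_congr_left (fun x hx => ?_)
        show φ x = Fin.castAdd M (ψ x.2)
        rw [hφ]
        exact dif_pos (hcase x hx)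
      exact ⟨w, hw, by rw [← heq, hmap]⟩
    have hinj : Function.Injective (Fin.castAdd (n := m) M) := fun x y h =>
      Fin.ext (by simpa using congrArg Fin.val h)
    exact hψ l₂ (by simp [hl₂, hl']) hch2 hnd2 (isRepetition_of_map hinj hrep2)
  · -- some vertex is outside the large part; its colour is globally unique
    push_neg at hcase
    obtain ⟨x, hx, hxi⟩ := hcase
    have hcmem : φ x ∈ w := by
      have h1 : φ x ∈ w ++ w := hmap ▸ List.mem_map_of_mem (f := φ) hx
      rcases List.mem_append.1 h1 with h | h <;> exact h
    have hcount : 2 ≤ List.count (φ x) (l.map φ) := by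
      rw [hmap, List.count_append]
      have h1 : 1 ≤ List.count (φ x) w := List.count_pos_iff.2 hcmem
      omega
    have hsub0 : List.Sublist (List.replicate 2 (φ x)) (l.map φ) :=
      List.replicate_sublist_iff.2 hcount
    obtain ⟨l'', hsub, hmap'⟩ := List.sublist_map_iff.1 hsub0
    have hlen2 : l''.length = 2 := by
      have := congrArg List.length hmap'; simpa using this.symm
    obtain ⟨a₁, b₁, rfl⟩ : ∃ a₁ b₁, l'' = [a₁, b₁] := by
      match l'', hlen2 with
      | [a₁, b₁], _ => exact ⟨a₁, b₁, rfl⟩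
    simp only [List.map_cons, List.map_nil, List.replicate, List.cons.injEq, and_true] at hmap'
    have hne : a₁ ≠ b₁ := by
      have h1 := hsub.nodup hn'
      simp only [List.nodup_cons, List.mem_singleton] at h1
      exact h1.1
    have hnoti0 : ∀ y : (Σ i, V i) × W, φ y = φ x → y.1.1 ≠ i₀ := by
      intro y hy hyi
      have h1 : (φ y).val = (φ x).val := congrArg Fin.val hy
      simp only [hφ, dif_pos hyi, dif_neg hxi, Fin.coe_castAdd, Fin.coe_natAdd] at h1
      have h2 : (ψ y.2).val < m := (ψ y.2).isLt
      omega
    have ha' := hnoti0 a₁ hmap'.1.symm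
    have hb' := hnoti0 b₁ hmap'.2.symm
    have heq2 : φ a₁ = φ b₁ := hmap'.1.symm.trans hmap'.2
    simp only [hφ, dif_neg ha', dif_neg hb'] at heq2
    have h3 : (emb ⟨a₁, ha'⟩ : Fin M) = emb ⟨b₁, hb'⟩ := by
      have := congrArg Fin.val heq2
      simp only [Fin.coe_natAdd] at this
      exact Fin.ext (Nat.add_left_cancel this)
    exact hne (congrArg Subtype.val (emb.injective h3))
end Upper

section Lower
variable {ι : Type*} [Fintype ι] (V : ι → Type*) [∀ i, Fintype (V i)]
  {W : Type*} [Fintype W] (H : SimpleGraph W)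

lemma lower_aux [Nonempty (Σ i, V i)] :
    thueNumber H +
        (Fintype.card (Σ i, V i) - Finset.univ.sup fun i => Fintype.card (V i)) *
          Fintype.card W ≤
      thueNumber (lexProd (SimpleGraph.completeMultipartiteGraph V) H) := by
  classical
  have hι : Nonempty ι := ⟨(Classical.arbitrary (Σ i, V i)).1⟩
  set α : ℕ := Finset.univ.sup fun i => Fintype.card (V i) with hα
  set n := Fintype.card (Σ i, V i) with hn
  apply le_thueNumber
  intro k φ hφ
  rw [nonRepColoring_iff] at hφ
  -- colours used in the `i`-th part
  set A : ι → Finset (Fin k) :=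
    fun i => (Finset.univ.filter fun x : (Σ i, V i) × W => x.1.1 = i).image φ with hA
  -- the colour sets of distinct parts are disjoint
  have hdisj : ∀ i j : ι, i ≠ j → Disjoint (A i) (A j) := by
    intro i j hij
    rw [Finset.disjoint_left]
    rintro c hci hcj
    simp only [hA, Finset.mem_image, Finset.mem_filter, Finset.mem_univ, true_and] at hci hcj
    obtain ⟨x, hx, hcx⟩ := hci
    obtain ⟨y, hy, hcy⟩ := hcj
    have hxy : x ≠ y := fun h => hij (hx ▸ hy ▸ congrArg (fun z : (Σ i, V i) × W => z.1.1) h)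
    refine hφ [x, y] (by simp) ?_ (by simp [hxy]) ⟨[c], by simp, by simp [hcx, hcy]⟩
    refine List.isChain_pair.2 (Or.inl ?_)
    refine SimpleGraph.comap_adj.2 ?_
    simp only [SimpleGraph.top_adj]
    intro h
    exact hij (by rw [← hx, ← hy]; exact h)
  -- hence the total number of colours is at least the sum of part colour counts
  have hsum : ∑ i, (A i).card ≤ k := by
    calc ∑ i, (A i).card = (Finset.univ.biUnion A).card :=
          (Finset.card_biUnion (fun i _ j _ hij => hdisj i j hij)).symm
      _ ≤ Fintype.card (Fin k) := by
          rw [← Finset.card_univ]; exact Finset.card_le_card (Finset.subset_univ _)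
      _ = k := Fintype.card_fin k
  -- a part with no repeated colour uses one colour per vertex
  have hA2 : ∀ i : ι,
      (¬ ∃ x y : (Σ i, V i) × W, x.1.1 = i ∧ y.1.1 = i ∧ x ≠ y ∧ φ x = φ y) →
      (A i).card = Fintype.card (V i) * Fintype.card W := by
    intro i hrep
    push_neg at hrep
    have hinj : Set.InjOn φ (Finset.univ.filter fun x : (Σ i, V i) × W => x.1.1 = i) := by
      intro x hx y hy hxy
      simp only [Finset.coe_filter, Finset.mem_univ, true_and, Set.mem_setOf_eq] at hx hy
      by_contra hne
      exact hrep x y hx hy hne hxy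
    rw [hA, Finset.card_image_of_injOn hinj]
    have he : (V i × W) ≃ {x : ((Σ i, V i) × W) // x.1.1 = i} := by
      refine Equiv.ofBijective (fun vw => ⟨((⟨i, vw.1⟩ : Σ j, V j), vw.2), rfl⟩) ⟨?_, ?_⟩
      · rintro ⟨v, w⟩ ⟨v', w'⟩ heq
        simp only [Subtype.mk.injEq, Prod.mk.injEq] at heq
        obtain ⟨h1, h2⟩ := heq
        exact Prod.ext (sigma_mk_injective h1) h2
      · rintro ⟨⟨⟨j, v⟩, w⟩, h⟩
        dsimp at h
        subst h
        exact ⟨(v, w), rfl⟩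
    calc (Finset.univ.filter fun x : (Σ i, V i) × W => x.1.1 = i).card
        = Fintype.card {x : ((Σ i, V i) × W) // x.1.1 = i} := (Fintype.card_subtype _).symm
      _ = Fintype.card (V i × W) := (Fintype.card_congr he).symm
      _ = Fintype.card (V i) * Fintype.card W := Fintype.card_prod _ _
  -- at most one part has a repeated colour
  have hrep1 : ∀ i j : ι,
      (∃ x y : (Σ i, V i) × W, x.1.1 = i ∧ y.1.1 = i ∧ x ≠ y ∧ φ x = φ y) →
      (∃ x y : (Σ i, V i) × W, x.1.1 = j ∧ y.1.1 = j ∧ x ≠ y ∧ φ x = φ y) → i = j := by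
    intro i j hi hj
    by_contra hij
    obtain ⟨x, y, hx, hy, hxy, hcxy⟩ := hi
    obtain ⟨x', y', hx', hy', hxy', hcxy'⟩ := hj
    have hadj : ∀ a b : (Σ i, V i) × W, a.1.1 = i → b.1.1 = j →
        (lexProd (SimpleGraph.completeMultipartiteGraph V) H).Adj a b := by
      intro a b ha hb
      refine Or.inl (SimpleGraph.comap_adj.2 ?_)
      simp only [SimpleGraph.top_adj]
      intro h
      exact hij (by rw [← ha, ← hb]; exact h)
    have hnei : ∀ a b : (Σ i, V i) × W, a.1.1 = i → b.1.1 = j → a ≠ b := by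
      intro a b ha hb h
      exact hij (ha ▸ hb ▸ congrArg (fun z : (Σ i, V i) × W => z.1.1) h)
    refine hφ [x, x', y, y'] (by simp) ?_ ?_ ⟨[φ x, φ x'], by simp, by simp [hcxy, hcxy']⟩
    · refine List.isChain_cons_cons.2 ⟨hadj x x' hx hx', ?_⟩
      refine List.isChain_cons_cons.2 ⟨((lexProd _ H).symm.symm _ _ (hadj y x' hy hx')), ?_⟩
      exact List.isChain_pair.2 (hadj y y' hy hy')
    · have n1 : x ≠ x' := hnei x x' hx hx'
      have n2 : x ≠ y' := hnei x y' hx hy'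
      have n3 : x' ≠ y := fun h => hnei y x' hy hx' h.symm
      have n4 : y ≠ y' := hnei y y' hy hy'
      simp [n1, n2, n3, n4, hxy, hxy']
  -- every nonempty part uses at least `thueNumber H` colours
  have hA4 : ∀ i : ι, Nonempty (V i) → thueNumber H ≤ (A i).card := by
    intro i hne
    obtain ⟨u₀⟩ := hne
    set pair : W → (Σ i, V i) × W := fun w => ((⟨i, u₀⟩ : Σ j, V j), w) with hpair
    have hmem : ∀ w, φ (pair w) ∈ A i := by
      intro w
      exact Finset.mem_image_of_mem φ (Finset.mem_filter.2 ⟨Finset.mem_univ _, rfl⟩)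
    have hAcard : Fintype.card {c // c ∈ A i} = (A i).card := Fintype.card_coe _
    set e : {c // c ∈ A i} ≃ Fin (A i).card := Fintype.equivFinOfCardEq hAcard with he
    set ψ : W → Fin (A i).card := fun w => e ⟨φ (pair w), hmem w⟩ with hψ
    apply thueNumber_le H ψ
    rw [nonRepColoring_iff]
    rintro l hl hc hnd hr
    have hpinj : Function.Injective pair := by
      intro a b h
      exact congrArg Prod.snd h
    have hLne : l.map pair ≠ [] := by simp [hl]
    have hLnd : (l.map pair).Nodup := hnd.map hpinj
    have hLch : List.Chain' (lexProd (SimpleGraph.completeMultipartiteGraph V) H).Adj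
        (l.map pair) := by
      simp only [List.Chain', List.isChain_map]
      exact hc.imp (fun a b h => Or.inr ⟨rfl, h⟩)
    refine hφ (l.map pair) hLne hLch hLnd ?_
    have heq : (l.map pair).map φ = (l.map ψ).map (fun c => (e.symm c).val) := by
      rw [List.map_map, List.map_map]
      refine List.map_congr_left (fun x hx => ?_)
      show φ (pair x) = (e.symm (ψ x)).val
      rw [hψ]
      simp
    rw [heq]
    exact isRepetition_map _ hr
  -- choose the (at most one) part allowed to repeat colours
  have hmain : ∃ istar : ι, Nonempty (V istar) ∧ Fintype.card (V istar) ≤ α ∧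
      ∀ j ≠ istar, ¬ ∃ x y : (Σ i, V i) × W, x.1.1 = j ∧ y.1.1 = j ∧ x ≠ y ∧ φ x = φ y := by
    by_cases hex : ∃ i, ∃ x y : (Σ i, V i) × W, x.1.1 = i ∧ y.1.1 = i ∧ x ≠ y ∧ φ x = φ y
    · obtain ⟨istar, x, y, hx, hy, hxy, hcxy⟩ := hex
      refine ⟨istar, ⟨hx ▸ x.1.2⟩, hα ▸ Finset.le_sup (f := fun i => Fintype.card (V i)) (Finset.mem_univ _), ?_⟩
      intro j hj hrepj
      exact hj (hrep1 j istar hrepj ⟨x, y, hx, hy, hxy, hcxy⟩)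
    · push_neg at hex
      obtain ⟨z⟩ := ‹Nonempty (Σ i, V i)›
      obtain ⟨i₀, -, hi₀⟩ := Finset.exists_mem_eq_sup Finset.univ Finset.univ_nonempty
        (fun i => Fintype.card (V i))
      refine ⟨i₀, ?_, hα ▸ Finset.le_sup (f := fun i => Fintype.card (V i)) (Finset.mem_univ _), fun j _ => by push_neg; exact hex j⟩
      rw [← Fintype.card_pos_iff]
      have h1 : 0 < Fintype.card (V z.1) := Fintype.card_pos_iff.2 ⟨z.2⟩
      have h2 : Fintype.card (V z.1) ≤ Fintype.card (V i₀) :=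
        hi₀ ▸ Finset.le_sup (f := fun i => Fintype.card (V i)) (Finset.mem_univ _)
      omega
  obtain ⟨istar, hnestar, hlestar, hnorep⟩ := hmain
  -- put the estimates together
  have hsplit : (A istar).card + ∑ j ∈ Finset.univ.erase istar, (A j).card = ∑ i, (A i).card :=
    Finset.add_sum_erase _ (fun j => (A j).card) (Finset.mem_univ istar)
  have hrest : ∑ j ∈ Finset.univ.erase istar, (A j).card
      = (∑ j ∈ Finset.univ.erase istar, Fintype.card (V j)) * Fintype.card W := by
    rw [Finset.sum_mul]
    refine Finset.sum_congr rfl (fun j hj => ?_)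
    exact hA2 j (hnorep j (Finset.mem_erase.1 hj).1)
  have hcards : Fintype.card (V istar) + ∑ j ∈ Finset.univ.erase istar, Fintype.card (V j) = n := by
    rw [hn, Fintype.card_sigma]
    exact Finset.add_sum_erase _ (fun j => Fintype.card (V j)) (Finset.mem_univ istar)
  have hfinal : thueNumber H + (n - α) * Fintype.card W ≤ ∑ i, (A i).card := by
    rw [← hsplit, hrest]
    have h1 : thueNumber H ≤ (A istar).card := hA4 istar hnestar
    have h2 : (n - α) ≤ ∑ j ∈ Finset.univ.erase istar, Fintype.card (V j) := by omega
    exact Nat.add_le_add h1 (Nat.mul_le_mul_right _ h2)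
  exact hfinal.trans hsum
end Lower


/-- `π(G ∘ H) = π(H) + (n - α(G))·|V(H)|` for a complete multipartite graph `G`. -/
theorem thueNumber_lexProd_completeMultipartite {ι : Type*} [Fintype ι]
    (V : ι → Type*) [∀ i, Fintype (V i)] [Nonempty (Σ i, V i)]
    {W : Type*} [Fintype W] (H : SimpleGraph W) :
    thueNumber (lexProd (SimpleGraph.completeMultipartiteGraph V) H) =
      thueNumber H +
        (Fintype.card (Σ i, V i) - indepNum (SimpleGraph.completeMultipartiteGraph V)) *
          Fintype.card W := by
  haveI : Nonempty ι := ⟨(Classical.arbitrary (Σ i, V i)).1⟩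
  rw [indepNum_completeMultipartite V]
  exact le_antisymm (upper_aux V H) (lower_aux V H)
end
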